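/- Let ρ satisfy (A3), suppose g satisfies (A4), let 0 < b < 1, and assume g(σ_M) ≤ b. If 0 < c ≤ c_o := inf{c(ε) : 0 < ε < b}, where c(ε) = ε⁻¹ log(σ_{b,ε}/γ_{b,ε}), then B_CM(ε) ≤ B_S(ε) for every ε ∈ (0, b). -/

import Mathlib

open MeasureTheory ProbabilityTheory Filter Set

set_option maxHeartbeats 3200000 in
/-- Theorem 6.2: Under (A3), (A4) and g(σ_M) ≤ b, if
0 < c ≤ c_o = inf{c(ε) : 0 < ε < b}, then B_CM(ε) ≤ B_S(ε) for every ε ∈ (0, b). -/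
theorem stmt15 (ρ : ℝ → ℝ)
    (hρ_meas : Measurable ρ)
    (hρ_even : ∀ u, ρ (-u) = ρ u)
    (hρ_mono : MonotoneOn ρ (Set.Ici 0))
    (hρ_zero : ρ 0 = 0)
    (hρ_bdd : ∀ u, 0 ≤ ρ u ∧ ρ u ≤ 1)
    (hρ_lim : Tendsto ρ atTop (nhds 1))
    (g : ℝ → ℝ)
    (hg : ∀ s, 0 < s → g s = ∫ z, ρ (z / s) ∂(gaussianReal 0 1))
    -- Condition (A4):
    (g' : ℝ → ℝ)
    (hg_deriv : ∀ s ∈ Set.Ioi (0 : ℝ), HasDerivAt g (g' s) s)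
    (hg'_cont : ContinuousOn g' (Set.Ioi 0))
    (φ : ℝ → ℝ) (hφ : ∀ s, φ s = -s * g' s)
    (hφ_pos : ∀ s ∈ Set.Ioi (0 : ℝ), 0 < φ s)
    (σM : ℝ) (hσM : 0 < σM)
    (hφ_mono : MonotoneOn φ (Set.Ioc 0 σM))
    (hφ_anti : AntitoneOn φ (Set.Ici σM))
    (b : ℝ) (hb0 : 0 < b) (hb1 : b < 1)
    (hgσM : g σM ≤ b)
    (σb γb : ℝ → ℝ)
    (hσb : ∀ ε ∈ Set.Ico (0 : ℝ) b, 0 < σb ε ∧ g (σb ε) = (b - ε) / (1 - ε))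
    (hγb : ∀ ε ∈ Set.Ico (0 : ℝ) b, 0 < γb ε ∧ g (γb ε) = b / (1 - ε))
    (cfun : ℝ → ℝ)
    (hcfun : ∀ ε ∈ Set.Ioo (0 : ℝ) b, cfun ε = ε⁻¹ * Real.log (σb ε / γb ε))
    (c : ℝ) (hc0 : 0 < c) (hcco : c ≤ sInf (cfun '' Set.Ioo 0 b))
    (A : ℝ → ℝ → ℝ) (hA : ∀ ε s, A ε s = c * (1 - ε) * g s + Real.log s)
    (D : ℝ → ℝ)
    (hD : ∀ ε, D ε = sInf (A ε '' Set.Ici (σb ε)) - sInf (A ε '' Set.Ici (γb ε)))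
    (BS : ℝ → ℝ) (hBS : ∀ ε, BS ε = Real.sqrt ((σb ε / γb ε) ^ 2 - 1))
    (BCM : ℝ → ℝ)
    (hBCM : ∀ ε, BCM ε = Real.sqrt (Real.exp (2 * c * ε + 2 * D ε) - 1)) :
    ∀ ε ∈ Set.Ioo (0 : ℝ) b, BCM ε ≤ BS ε := by
  intro ε hε
  obtain ⟨hε0, hεb⟩ := hε
  have h1ε : (0:ℝ) < 1 - ε := by linarith
  -- g is continuous and strictly decreasing on (0,∞)
  have hgcont : ContinuousOn g (Set.Ioi 0) := fun s hs =>
    (hg_deriv s hs).continuousAt.continuousWithinAt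
  have hganti : StrictAntiOn g (Set.Ioi 0) := by
    apply strictAntiOn_of_deriv_neg (convex_Ioi 0) hgcont
    intro s hs
    rw [interior_Ioi] at hs
    rw [(hg_deriv s hs).deriv]
    have h1 := hφ_pos s hs
    rw [hφ s] at h1
    have hs0 : (0:ℝ) < s := hs
    nlinarith
  have hlt_of_glt : ∀ x y : ℝ, 0 < x → 0 < y → g y < g x → x < y := by
    intro x y hx hy h
    by_contra hc
    push_neg at hc
    rcases hc.lt_or_eq with h' | h'
    · exact absurd (hganti hy hx h') (not_lt.2 h.le)
    · rw [h'] at h; exact lt_irrefl _ h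
  have hle_of_gle : ∀ x y : ℝ, 0 < x → 0 < y → g y ≤ g x → x ≤ y := by
    intro x y hx hy h
    by_contra hc
    push_neg at hc
    exact absurd (hganti hy hx hc) (not_lt.2 h)
  have hgnn : ∀ s : ℝ, 0 < s → 0 ≤ g s := by
    intro s hs
    rw [hg s hs]
    exact integral_nonneg fun z => (hρ_bdd (z / s)).1
  -- r := σb 0, g r = b
  obtain ⟨hr0, hgr'⟩ := hσb 0 ⟨le_refl 0, hb0⟩
  have hgr : g (σb 0) = b := by rw [hgr']; norm_num
  obtain ⟨hγ0, hgγ⟩ := hγb ε ⟨hε0.le, hεb⟩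
  obtain ⟨hσ0, hgσ⟩ := hσb ε ⟨hε0.le, hεb⟩
  have hγr : γb ε < σb 0 := by
    apply hlt_of_glt _ _ hγ0 hr0
    rw [hgr, hgγ]
    rw [lt_div_iff₀ h1ε]
    nlinarith
  have hrσ : σb 0 < σb ε := by
    apply hlt_of_glt _ _ hr0 hσ0
    rw [hgσ, hgr]
    rw [div_lt_iff₀ h1ε]
    nlinarith
  have hrσM : σb 0 ≤ σM := hle_of_gle _ σM hr0 hσM (by rw [hgr]; exact hgσM)
  -- c ≤ cfun u
  have hσγlt : ∀ u, 0 < u → u < b → γb u < σb u := by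
    intro u hu0 hub
    obtain ⟨hγu0, hgγu⟩ := hγb u ⟨hu0.le, hub⟩
    obtain ⟨hσu0, hgσu⟩ := hσb u ⟨hu0.le, hub⟩
    apply hlt_of_glt _ _ hγu0 hσu0
    rw [hgγu, hgσu]
    have h1u : (0:ℝ) < 1 - u := by linarith
    rw [div_lt_div_iff₀ h1u h1u]
    nlinarith
  have hc_le : ∀ u, 0 < u → u < b → c * u ≤ Real.log (σb u) - Real.log (γb u) := by
    intro u hu0 hub
    obtain ⟨hγu0, hgγu⟩ := hγb u ⟨hu0.le, hub⟩
    obtain ⟨hσu0, hgσu⟩ := hσb u ⟨hu0.le, hub⟩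
    have hbdd : BddBelow (cfun '' Set.Ioo 0 b) := by
      refine ⟨0, ?_⟩
      rintro x ⟨t, ht, rfl⟩
      rw [hcfun t ht]
      obtain ⟨hγt0, _⟩ := hγb t ⟨ht.1.le, ht.2⟩
      have hlg : 0 ≤ Real.log (σb t / γb t) :=
        Real.log_nonneg ((one_le_div hγt0).mpr (hσγlt t ht.1 ht.2).le)
      exact mul_nonneg (inv_nonneg.2 ht.1.le) hlg
    have h1 : c ≤ cfun u := hcco.trans (csInf_le hbdd (Set.mem_image_of_mem _ ⟨hu0, hub⟩))
    rw [hcfun u ⟨hu0, hub⟩, inv_mul_eq_div, le_div_iff₀ hu0] at h1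
    rw [← Real.log_div hσu0.ne' hγu0.ne']
    exact h1
  -- FTC for g
  have hg_ftc : ∀ x y : ℝ, 0 < x → x ≤ y → g y - g x = ∫ t in x..y, g' t := by
    intro x y hx hxy
    have hsub : Set.uIcc x y ⊆ Set.Ioi 0 := by
      rw [Set.uIcc_of_le hxy]
      intro t ht
      exact lt_of_lt_of_le hx ht.1
    exact (intervalIntegral.integral_eq_sub_of_hasDerivAt
      (fun t ht => hg_deriv t (hsub ht))
      ((hg'_cont.mono hsub).intervalIntegrable)).symm
  -- KEY LEMMA : c * φ (σb 0) ≤ 1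
  have hφr_pos : 0 < φ (σb 0) := hφ_pos _ hr0
  have hφcont : ContinuousAt φ (σb 0) := by
    have h1 : ContinuousOn φ (Set.Ioi 0) := by
      have h2 : ContinuousOn (fun s : ℝ => -s * g' s) (Set.Ioi 0) :=
        (continuous_neg.comp continuous_id).continuousOn.mul hg'_cont
      exact (funext hφ : φ = fun s => -s * g' s) ▸ h2
    exact h1.continuousAt (isOpen_Ioi.mem_nhds hr0)
  have hkey : c * φ (σb 0) ≤ 1 := by
    by_contra hlt
    push_neg at hlt
    obtain ⟨θ, hθdef⟩ : ∃ x : ℝ, x = c * φ (σb 0) - 1 := ⟨_, rfl⟩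
    have hθ0 : 0 < θ := by rw [hθdef]; linarith
    obtain ⟨η, hηdef⟩ : ∃ x : ℝ, x = θ / (4 * c) := ⟨_, rfl⟩
    have hη0 : 0 < η := by rw [hηdef]; positivity
    have hηφ : η < φ (σb 0) := by
      rw [hηdef, div_lt_iff₀ (by positivity)]
      rw [hθdef]
      nlinarith [mul_pos hc0 hφr_pos]
    obtain ⟨δ', hδ'0, hδ'⟩ := Metric.continuousAt_iff.mp hφcont η hη0
    obtain ⟨δ, hδ0, hδr, hδδ'⟩ : ∃ x : ℝ, 0 < x ∧ x < σb 0 ∧ x < δ' :=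
      ⟨min (δ' / 2) (σb 0 / 2), lt_min (by linarith) (by linarith),
        lt_of_le_of_lt (min_le_right _ _) (by linarith),
        lt_of_le_of_lt (min_le_left _ _) (by linarith)⟩
    have hφnear : ∀ t, σb 0 - δ ≤ t → t ≤ σb 0 + δ → φ (σb 0) - η < φ t := by
      intro t h1 h2
      have hdist : dist t (σb 0) < δ' := by
        rw [Real.dist_eq, abs_lt]
        constructor <;> linarith
      have hd := hδ' hdist
      rw [Real.dist_eq, abs_lt] at hd
      linarith [hd.1]
    have hrδ0 : 0 < σb 0 - δ := by linarith
    have hG1 : b < g (σb 0 - δ) := by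
      rw [← hgr]
      exact hganti (Set.mem_Ioi.mpr hrδ0) (Set.mem_Ioi.mpr hr0) (by linarith)
    have hG2 : g (σb 0 + δ) < b := by
      rw [← hgr]
      exact hganti (Set.mem_Ioi.mpr hr0) (Set.mem_Ioi.mpr (by linarith)) (by linarith)
    have hG2nn : 0 ≤ g (σb 0 + δ) := hgnn _ (by linarith)
    have hG10 : 0 < g (σb 0 - δ) := by linarith
    have hG21 : g (σb 0 + δ) < 1 := by linarith
    have hq1 : 0 < 1 - b / g (σb 0 - δ) := by
      rw [sub_pos, div_lt_one hG10]; exact hG1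
    have hq2 : 0 < (b - g (σb 0 + δ)) / (1 - g (σb 0 + δ)) :=
      div_pos (by linarith) (by linarith)
    have hq3 : 0 < θ / (8 * c * φ (σb 0)) :=
      div_pos hθ0 (mul_pos (by linarith) hφr_pos)
    obtain ⟨u, hu0, hub, hub1, hub2, hub3⟩ :
        ∃ x : ℝ, 0 < x ∧ x < b ∧ x ≤ (1 - b / g (σb 0 - δ)) / 2 ∧
          x ≤ (b - g (σb 0 + δ)) / (1 - g (σb 0 + δ)) / 2 ∧ x ≤ θ / (8 * c * φ (σb 0)) :=
      ⟨min (min (b / 2) ((1 - b / g (σb 0 - δ)) / 2))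
          (min ((b - g (σb 0 + δ)) / (1 - g (σb 0 + δ)) / 2) (θ / (8 * c * φ (σb 0)))),
        lt_min (lt_min (by linarith) (by linarith)) (lt_min (by linarith) hq3),
        lt_of_le_of_lt ((min_le_left _ _).trans (min_le_left _ _)) (by linarith),
        (min_le_left _ _).trans (min_le_right _ _),
        (min_le_right _ _).trans (min_le_left _ _),
        (min_le_right _ _).trans (min_le_right _ _)⟩
    have h1u : 0 < 1 - u := by linarith
    obtain ⟨hγu0, hgγu⟩ := hγb u ⟨hu0.le, hub⟩
    obtain ⟨hσu0, hgσu⟩ := hσb u ⟨hu0.le, hub⟩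
    have hγul : σb 0 - δ < γb u := by
      apply hlt_of_glt _ _ hrδ0 hγu0
      rw [hgγu, div_lt_iff₀ h1u]
      have h3 : b / g (σb 0 - δ) < 1 - u := by linarith
      have h4 := mul_lt_mul_of_pos_right h3 hG10
      rw [div_mul_cancel₀ b hG10.ne'] at h4
      nlinarith [h4]
    have hσur : σb u < σb 0 + δ := by
      apply hlt_of_glt _ _ hσu0 (by linarith : (0:ℝ) < σb 0 + δ)
      rw [hgσu, lt_div_iff₀ h1u]
      have h2 : u < (b - g (σb 0 + δ)) / (1 - g (σb 0 + δ)) := by linarith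
      rw [lt_div_iff₀ (by linarith : (0:ℝ) < 1 - g (σb 0 + δ))] at h2
      nlinarith [h2]
    have hγuσu : γb u < σb u := hσγlt u hu0 hub
    have hglow : ∀ t ∈ Set.Icc (γb u) (σb u), (φ (σb 0) - η) * t⁻¹ ≤ -g' t := by
      intro t ht
      have ht0 : 0 < t := lt_of_lt_of_le hγu0 ht.1
      have hφt : φ (σb 0) - η < φ t :=
        hφnear t (by linarith [ht.1]) (by linarith [ht.2])
      have hgt : -g' t = φ t * t⁻¹ := by
        rw [hφ t]; field_simp
      rw [hgt]
      exact mul_le_mul_of_nonneg_right hφt.le (inv_nonneg.2 ht0.le)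
    have hsub : Set.uIcc (γb u) (σb u) ⊆ Set.Ioi 0 := by
      rw [Set.uIcc_of_le hγuσu.le]
      intro t ht
      exact lt_of_lt_of_le hγu0 ht.1
    have hint1 : IntervalIntegrable (fun t => -g' t) volume (γb u) (σb u) :=
      ((hg'_cont.mono hsub).neg).intervalIntegrable
    have hint2 : IntervalIntegrable (fun t : ℝ => (φ (σb 0) - η) * t⁻¹) volume (γb u) (σb u) := by
      apply ContinuousOn.intervalIntegrable
      apply ContinuousOn.mul continuousOn_const
      apply ContinuousOn.mono continuousOn_inv₀
      intro t ht
      simp only [Set.mem_compl_iff, Set.mem_singleton_iff]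
      exact ne_of_gt (hsub ht)
    have hcomp : (φ (σb 0) - η) * (Real.log (σb u) - Real.log (γb u)) ≤ u / (1 - u) := by
      have h1 : (∫ t in (γb u)..(σb u), (φ (σb 0) - η) * t⁻¹) ≤ ∫ t in (γb u)..(σb u), -g' t :=
        intervalIntegral.integral_mono_on hγuσu.le hint2 hint1 hglow
      have h2 : (∫ t in (γb u)..(σb u), -g' t) = -(g (σb u) - g (γb u)) := by
        rw [intervalIntegral.integral_neg, ← hg_ftc (γb u) (σb u) hγu0 hγuσu.le]
      have h3 : (∫ t in (γb u)..(σb u), (φ (σb 0) - η) * t⁻¹)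
          = (φ (σb 0) - η) * (Real.log (σb u) - Real.log (γb u)) := by
        rw [intervalIntegral.integral_const_mul, integral_inv_of_pos hγu0 hσu0,
          Real.log_div hσu0.ne' hγu0.ne']
      have h4 : g (γb u) - g (σb u) = u / (1 - u) := by
        rw [hgγu, hgσu]
        field_simp
        ring
      rw [h3, h2] at h1
      linarith
    have hlogc : c * u ≤ Real.log (σb u) - Real.log (γb u) := hc_le u hu0 hub
    have hφrη : 0 < φ (σb 0) - η := by linarith
    have hfinal : (φ (σb 0) - η) * (c * u) ≤ u / (1 - u) :=
      le_trans (mul_le_mul_of_nonneg_left hlogc hφrη.le) hcomp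
    have h6 := mul_le_mul_of_nonneg_right hfinal h1u.le
    rw [div_mul_cancel₀ _ h1u.ne'] at h6
    have h5 : (φ (σb 0) - η) * c * (1 - u) ≤ 1 := by
      have h9 : u * ((φ (σb 0) - η) * c * (1 - u)) ≤ u * 1 := by
        calc u * ((φ (σb 0) - η) * c * (1 - u))
            = (φ (σb 0) - η) * (c * u) * (1 - u) := by ring
          _ ≤ u := h6
          _ = u * 1 := by ring
      exact le_of_mul_le_mul_left h9 hu0
    have hu3' : u * (8 * c * φ (σb 0)) ≤ θ := by
      rw [← le_div_iff₀ (mul_pos (by linarith) hφr_pos)]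
      exact hub3
    have hηc : η * c = θ / 4 := by
      rw [hηdef]
      field_simp
    have e2 : c * φ (σb 0) = θ + 1 := by rw [hθdef]; ring
    have h5' : θ + 1 - θ / 4 - u * (θ + 1) + u * (θ / 4) ≤ 1 := by
      have e1 : (φ (σb 0) - η) * c * (1 - u)
          = c * φ (σb 0) - η * c - u * (c * φ (σb 0)) + u * (η * c) := by ring
      rw [e1, hηc, e2] at h5
      linarith [h5]
    have hu3'' : u * (θ + 1) ≤ θ / 8 := by
      have h9 : u * (8 * (θ + 1)) ≤ θ := by
        calc u * (8 * (θ + 1)) = u * (8 * c * φ (σb 0)) := by rw [← e2]; ring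
          _ ≤ θ := hu3'
      linarith [h9]
    linarith [h5', hu3'', mul_nonneg hu0.le hθ0.le, hu0.le]
  -- A ε is monotone on (0, σb 0]
  have hAmono : ∀ x y : ℝ, 0 < x → x ≤ y → y ≤ σb 0 → A ε x ≤ A ε y := by
    intro x y hx hxy hyr
    have hy0 : 0 < y := lt_of_lt_of_le hx hxy
    have hsub : Set.uIcc x y ⊆ Set.Ioi 0 := by
      rw [Set.uIcc_of_le hxy]
      intro t ht
      exact lt_of_lt_of_le hx ht.1
    have hint1 : IntervalIntegrable (fun t => c * (1 - ε) * g' t) volume x y :=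
      (continuousOn_const.mul (hg'_cont.mono hsub)).intervalIntegrable
    have hint2 : IntervalIntegrable (fun t : ℝ => t⁻¹) volume x y := by
      apply ContinuousOn.intervalIntegrable
      apply ContinuousOn.mono continuousOn_inv₀
      intro t ht
      simp only [Set.mem_compl_iff, Set.mem_singleton_iff]
      exact ne_of_gt (hsub ht)
    have hnn : 0 ≤ ∫ t in x..y, (c * (1 - ε) * g' t + t⁻¹) := by
      apply intervalIntegral.integral_nonneg hxy
      intro t ht
      have ht0 : 0 < t := lt_of_lt_of_le hx ht.1
      have htr : t ≤ σb 0 := le_trans ht.2 hyr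
      have hφt : φ t ≤ φ (σb 0) := hφ_mono ⟨ht0, le_trans htr hrσM⟩ ⟨hr0, hrσM⟩ htr
      have hφtpos : 0 < φ t := hφ_pos t ht0
      have hkle : c * (1 - ε) * φ t ≤ 1 := by
        nlinarith [hkey, mul_le_mul_of_nonneg_left hφt hc0.le,
          mul_nonneg (mul_nonneg hc0.le hε0.le) hφtpos.le]
      have hg't : g' t = -(φ t) / t := by
        rw [hφ t]; field_simp
      rw [hg't]
      have heq : c * (1 - ε) * (-(φ t) / t) + t⁻¹ = (1 - c * (1 - ε) * φ t) / t := by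
        field_simp
        ring
      rw [heq]
      exact div_nonneg (by linarith) ht0.le
    have hsum : (∫ t in x..y, (c * (1 - ε) * g' t + t⁻¹))
        = c * (1 - ε) * (g y - g x) + (Real.log y - Real.log x) := by
      rw [intervalIntegral.integral_add hint1 hint2,
        intervalIntegral.integral_const_mul, ← hg_ftc x y hx hxy,
        integral_inv_of_pos hx hy0,
        Real.log_div hy0.ne' hx.ne']
    rw [hA, hA]
    rw [hsum] at hnn
    linarith
  -- CLAIM: A ε γ ≤ A ε s on [γ, σ]
  have hclaim : ∀ s, γb ε ≤ s → s ≤ σb ε → A ε (γb ε) ≤ A ε s := by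
    intro s hγs hsσ
    have hs0 : 0 < s := lt_of_lt_of_le hγ0 hγs
    rcases le_or_gt s (σb 0) with hsr | hrs
    · exact hAmono (γb ε) s hγ0 hγs hsr
    · have hvb : g s < b := by rw [← hgr]; exact hganti hr0 hs0 hrs
      have hvlb : (b - ε) / (1 - ε) ≤ g s := by
        rw [← hgσ]
        rcases hsσ.lt_or_eq with h | h
        · exact (hganti hs0 hσ0 h).le
        · rw [h]
      have hv0 : 0 ≤ g s := hgnn s hs0
      have h1v : 0 < 1 - g s := by linarith
      set u := (b - g s) / (1 - g s) with hudef
      have hu0 : 0 < u := div_pos (by linarith) h1v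
      have huε : u ≤ ε := by
        rw [hudef, div_le_iff₀ h1v]
        have h2 := (div_le_iff₀ h1ε).mp hvlb
        nlinarith
      have hub : u < b := lt_of_le_of_lt huε hεb
      have h1u : 0 < 1 - u := by linarith
      obtain ⟨hγu0, hgγu⟩ := hγb u ⟨hu0.le, hub⟩
      obtain ⟨hσu0, hgσu⟩ := hσb u ⟨hu0.le, hub⟩
      have hgσus : g (σb u) = g s := by
        rw [hgσu, div_eq_iff h1u.ne', hudef]
        field_simp
        ring
      have hσus : σb u = s :=
        le_antisymm (hle_of_gle _ _ hσu0 hs0 hgσus.ge) (hle_of_gle _ _ hs0 hσu0 hgσus.le)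
      have hγuγ : γb ε ≤ γb u := by
        apply hle_of_gle _ _ hγ0 hγu0
        rw [hgγu, hgγ]
        rw [div_le_div_iff₀ h1u h1ε]
        nlinarith
      have hγur : γb u ≤ σb 0 := by
        apply hle_of_gle _ _ hγu0 hr0
        rw [hgr, hgγu]
        rw [le_div_iff₀ h1u]
        nlinarith
      have step1 : A ε (γb ε) ≤ A ε (γb u) := hAmono _ _ hγ0 hγuγ hγur
      have step2 : A ε (γb u) ≤ A ε (σb u) := by
        rw [hA, hA, hgσu, hgγu]
        have hlog := hc_le u hu0 hub
        have e1 : c * (1 - ε) * (b / (1 - u)) - c * (1 - ε) * ((b - u) / (1 - u))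
            = c * (1 - ε) * u / (1 - u) := by
          field_simp
          ring
        have e2 : c * (1 - ε) * u / (1 - u) ≤ c * u := by
          rw [div_le_iff₀ h1u]
          nlinarith [mul_pos hc0 hu0]
        linarith
      rw [← hσus]
      linarith
  -- inf bounds
  have hbdd2 : BddBelow (A ε '' Set.Ici (σb ε)) := by
    refine ⟨Real.log (σb ε), ?_⟩
    rintro x ⟨t, ht, rfl⟩
    have ht0 : 0 < t := lt_of_lt_of_le hσ0 ht
    rw [hA]
    have h1 : Real.log (σb ε) ≤ Real.log t := Real.log_le_log hσ0 ht
    have h2 : 0 ≤ c * (1 - ε) * g t :=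
      mul_nonneg (mul_nonneg hc0.le h1ε.le) (hgnn t ht0)
    linarith
  have hI2le : sInf (A ε '' Set.Ici (σb ε)) ≤ A ε (σb ε) :=
    csInf_le hbdd2 (Set.mem_image_of_mem _ Set.self_mem_Ici)
  have hI1ge : min (A ε (γb ε)) (sInf (A ε '' Set.Ici (σb ε)))
      ≤ sInf (A ε '' Set.Ici (γb ε)) := by
    apply le_csInf ⟨A ε (γb ε), Set.mem_image_of_mem _ Set.self_mem_Ici⟩
    rintro x ⟨t, ht, rfl⟩
    rcases le_or_gt t (σb ε) with h | h
    · exact (min_le_left _ _).trans (hclaim t ht h)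
    · exact (min_le_right _ _).trans (csInf_le hbdd2 (Set.mem_image_of_mem _ h.le))
  have hAd : A ε (σb ε) - A ε (γb ε)
      = (Real.log (σb ε) - Real.log (γb ε)) - c * ε := by
    rw [hA, hA, hgσ, hgγ]
    have e1 : c * (1 - ε) * ((b - ε) / (1 - ε)) - c * (1 - ε) * (b / (1 - ε)) = -(c * ε) := by
      field_simp
      ring
    linarith
  have hcε : c * ε ≤ Real.log (σb ε) - Real.log (γb ε) := hc_le ε hε0 hεb
  have hDle : D ε ≤ (Real.log (σb ε) - Real.log (γb ε)) - c * ε := by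
    rw [hD ε]
    rcases le_total (A ε (γb ε)) (sInf (A ε '' Set.Ici (σb ε))) with h | h
    · rw [min_eq_left h] at hI1ge
      linarith
    · rw [min_eq_right h] at hI1ge
      linarith
  -- finish
  have hργ : 0 < σb ε / γb ε := div_pos hσ0 hγ0
  have hexp : Real.exp (2 * c * ε + 2 * D ε) ≤ (σb ε / γb ε) ^ 2 := by
    have h1 : 2 * c * ε + 2 * D ε ≤ 2 * Real.log (σb ε / γb ε) := by
      rw [Real.log_div hσ0.ne' hγ0.ne']
      linarith
    calc Real.exp (2 * c * ε + 2 * D ε)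
        ≤ Real.exp (2 * Real.log (σb ε / γb ε)) := Real.exp_le_exp.mpr h1
      _ = (σb ε / γb ε) ^ 2 := by
          rw [two_mul, Real.exp_add, Real.exp_log hργ, sq]
  rw [hBCM, hBS]
  apply Real.sqrt_le_sqrt
  linarith
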